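/- Let n ≥ 2, τ ∈ (−1,1), X a measurable space, and D a probability measure on X × [n]. Then for every measurable f : X → R^n, er^ℓ_D[pred^OVA_τ ∘ f] − er^{ℓ,*}_D ≤ ( er^{ψ^OVA}_D[f] − er^{ψ^OVA,*}_D ) / ( 2(1 − |τ|) ), where ℓ = ℓ^{1/2} is the abstain(1/2) loss and pred^OVA_τ is a fixed measurable tie-breaking choice. -/

import Mathlib

open scoped BigOperators ENNReal
open MeasureTheory

/-- The abstain(1/2) loss is `abstainLoss n (1/2)`. -/
noncomputable def abstainLoss (n : ℕ) (α : ℝ) (y : Fin n) (t : Fin (n + 1)) : ℝ :=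
  if t = Fin.last n then α else if (t : ℕ) = (y : ℕ) then 0 else 1

/-- One-vs-all hinge surrogate: `ψ^OVA(y,u) = (1 − u_y)_+ + Σ_{i≠y} (1 + u_i)_+`. -/
noncomputable def psiOVA (n : ℕ) (y : Fin n) (u : Fin n → ℝ) : ℝ :=
  max (1 - u y) 0 + ∑ i ∈ Finset.univ.erase y, max (1 + u i) 0

/-- `pred^OVA_τ`: the smallest index attaining `max_i u_i` if `max_j u_j > τ`,
and `n+1` otherwise. -/
noncomputable def predOVA (n : ℕ) (τ : ℝ) (u : Fin n → ℝ) : Fin (n + 1) :=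
  if h : ∃ y : Fin n, (∀ i, u i ≤ u y) ∧ τ < u y then
    Fin.castSucc ((Finset.univ.filter fun y : Fin n => (∀ i, u i ≤ u y) ∧ τ < u y).min'
      (by obtain ⟨y, hy⟩ := h; exact ⟨y, by simpa using hy⟩))
  else Fin.last n

/-! ### Auxiliary real-analytic lemmas -/

noncomputable def clampR (v : ℝ) : ℝ := max (-1) (min 1 v)

lemma clampR_le_one (v : ℝ) : clampR v ≤ 1 := by
  unfold clampR; simp [min_le_left]

lemma neg_one_le_clampR (v : ℝ) : -1 ≤ clampR v := le_max_left _ _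

lemma clampR_mono {v w : ℝ} (h : v ≤ w) : clampR v ≤ clampR w := by
  unfold clampR; exact max_le_max le_rfl (min_le_min le_rfl h)

lemma le_clampR {τ v : ℝ} (hτ1 : τ ≤ 1) (h : τ ≤ v) : τ ≤ clampR v := by
  unfold clampR
  rcases le_total v 1 with hv | hv
  · exact le_max_of_le_right (le_min hτ1 h)
  · exact le_max_of_le_right (le_min hτ1 (hτ1.trans hv))

lemma clampR_le {τ v : ℝ} (hτ0 : -1 ≤ τ) (h : v ≤ τ) : clampR v ≤ τ := by
  unfold clampR
  exact max_le hτ0 ((min_le_right _ _).trans h)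

noncomputable def phiR (q v : ℝ) : ℝ := q * max (1 - v) 0 + (1 - q) * max (1 + v) 0

lemma phiR_ge_lin (q v : ℝ) (h0 : 0 ≤ q) (h1 : q ≤ 1) :
    1 - clampR v * (2 * q - 1) ≤ phiR q v := by
  unfold phiR clampR
  rcases le_total v (-1) with hv | hv
  · rw [min_eq_right (by linarith), max_eq_left (by linarith)]
    have h2 : max (1 + v) 0 ≥ 0 := le_max_right _ _
    have h3 : max (1 - v) 0 = 1 - v := max_eq_left (by linarith)
    nlinarith
  · rcases le_total 1 v with hv1 | hv1
    · rw [min_eq_left hv1, max_eq_right (by linarith)]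
      have h2 : max (1 - v) 0 ≥ 0 := le_max_right _ _
      have h3 : max (1 + v) 0 = 1 + v := max_eq_left (by linarith)
      nlinarith
    · rw [min_eq_right hv1, max_eq_right (by linarith)]
      have h3 : max (1 + v) 0 = 1 + v := max_eq_left (by linarith)
      have h4 : max (1 - v) 0 = 1 - v := max_eq_left (by linarith)
      rw [h3, h4]; ring_nf; nlinarith [sq_nonneg v]

lemma psi_sum_eq (n : ℕ) (q u : Fin n → ℝ) (hqs : ∑ i, q i = 1) :
    ∑ i, q i * psiOVA n i u = ∑ i, phiR (q i) (u i) := by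
  have key : ∀ y : Fin n, psiOVA n y u
      = max (1 - u y) 0 + ((∑ i, max (1 + u i) 0) - max (1 + u y) 0) := by
    intro y
    rw [psiOVA, Finset.sum_erase_eq_sub (Finset.mem_univ y)]
  simp only [key, phiR]
  rw [Finset.sum_congr rfl (fun i _ => mul_add (q i) _ _), Finset.sum_add_distrib]
  rw [Finset.sum_congr rfl (fun i _ => by ring :
    ∀ i ∈ Finset.univ, q i * ((∑ k, max (1 + u k) 0) - max (1 + u i) 0)
      = q i * (∑ k, max (1 + u k) 0) - q i * max (1 + u i) 0)]
  rw [Finset.sum_sub_distrib, ← Finset.sum_mul, hqs, one_mul]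
  rw [Finset.sum_add_distrib]
  congr 1
  rw [← Finset.sum_sub_distrib]
  exact Finset.sum_congr rfl (fun i _ => by ring)

lemma psi_sum_star (n : ℕ) (q : Fin n → ℝ) (hqs : ∑ i, q i = 1) :
    ∑ i, q i * psiOVA n i (fun k => if 1/2 < q k then (1:ℝ) else -1)
      = ∑ i, (1 - |2 * q i - 1|) := by
  rw [psi_sum_eq n q _ hqs]
  refine Finset.sum_congr rfl (fun i _ => ?_)
  by_cases h : 1/2 < q i
  · simp only [h, if_pos, phiR]
    rw [abs_of_pos (by linarith)]
    norm_num
    ring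
  · simp only [h, if_neg, if_false, phiR]
    push_neg at h
    rw [abs_of_nonpos (by linarith)]
    norm_num
    ring

lemma lrisk_last (n : ℕ) (q : Fin n → ℝ) (hqs : ∑ i, q i = 1) :
    ∑ i, q i * abstainLoss n (1/2) i (Fin.last n) = 1/2 := by
  have : ∀ i : Fin n, abstainLoss n (1/2) i (Fin.last n) = 1/2 := fun i => if_pos rfl
  simp only [this]
  rw [← Finset.sum_mul, hqs, one_mul]

lemma lrisk_cast (n : ℕ) (q : Fin n → ℝ) (hqs : ∑ i, q i = 1) (j : Fin n) :
    ∑ i, q i * abstainLoss n (1/2) i (Fin.castSucc j) = 1 - q j := by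
  have hne : Fin.castSucc j ≠ Fin.last n := (Fin.castSucc_lt_last j).ne
  have : ∀ i : Fin n, q i * abstainLoss n (1/2) i (Fin.castSucc j)
      = q i - (if i = j then q i else 0) := by
    intro i
    simp only [abstainLoss, if_neg hne, Fin.coe_castSucc]
    by_cases h : i = j
    · simp [h]
    · have : (j : ℕ) ≠ (i : ℕ) := fun hc => h (Fin.ext hc.symm)
      simp [h, this]
  rw [Finset.sum_congr rfl (fun i _ => this i), Finset.sum_sub_distrib, hqs,
    Finset.sum_ite_eq' Finset.univ j q, if_pos (Finset.mem_univ j)]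

/-! ### Properties of `predOVA` -/

lemma predOVA_spec (n : ℕ) [NeZero n] (τ : ℝ) (u : Fin n → ℝ) :
    (predOVA n τ u = Fin.last n ∧ ∀ i, u i ≤ τ) ∨
    (∃ j : Fin n, predOVA n τ u = Fin.castSucc j ∧ (∀ i, u i ≤ u j) ∧ τ < u j) := by
  unfold predOVA
  by_cases h : ∃ y : Fin n, (∀ i, u i ≤ u y) ∧ τ < u y
  · right
    rw [dif_pos h]
    set s := Finset.univ.filter fun y : Fin n => (∀ i, u i ≤ u y) ∧ τ < u y with hs
    have hne : s.Nonempty := by obtain ⟨y, hy⟩ := h; exact ⟨y, by simpa [hs] using hy⟩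
    refine ⟨s.min' hne, rfl, ?_⟩
    have := s.min'_mem hne
    simpa [hs] using this
  · left
    rw [dif_neg h]
    refine ⟨rfl, fun i => ?_⟩
    push_neg at h
    obtain ⟨y, hy⟩ := Finite.exists_max u
    exact (hy i).trans (h y hy)

lemma predOVA_eq_castSucc_iff (n : ℕ) (τ : ℝ) (u : Fin n → ℝ) (j : Fin n) :
    predOVA n τ u = Fin.castSucc j ↔
      ((∀ i, u i ≤ u j) ∧ τ < u j) ∧
        ∀ k : Fin n, ((∀ i, u i ≤ u k) ∧ τ < u k) → j ≤ k := by
  unfold predOVA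
  by_cases h : ∃ y : Fin n, (∀ i, u i ≤ u y) ∧ τ < u y
  · rw [dif_pos h]
    set s := Finset.univ.filter fun y : Fin n => (∀ i, u i ≤ u y) ∧ τ < u y with hs
    have hne : s.Nonempty := by obtain ⟨y, hy⟩ := h; exact ⟨y, by simpa [hs] using hy⟩
    rw [Fin.castSucc_inj]
    constructor
    · rintro rfl
      have hmem := s.min'_mem hne
      refine ⟨by simpa [hs] using hmem, fun k hk => s.min'_le k (by simpa [hs] using hk)⟩
    · rintro ⟨hj, hmin⟩
      exact le_antisymm (s.min'_le j (by simpa [hs] using hj))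
        (hmin _ (by simpa [hs] using s.min'_mem hne))
  · rw [dif_neg h]
    constructor
    · intro hc; exact absurd hc.symm (Fin.castSucc_lt_last j).ne
    · rintro ⟨hj, -⟩; exact absurd ⟨j, hj⟩ h

lemma predOVA_eq_last_iff (n : ℕ) (τ : ℝ) (u : Fin n → ℝ) :
    predOVA n τ u = Fin.last n ↔ ¬ ∃ y : Fin n, (∀ i, u i ≤ u y) ∧ τ < u y := by
  unfold predOVA
  by_cases h : ∃ y : Fin n, (∀ i, u i ≤ u y) ∧ τ < u y
  · rw [dif_pos h]
    simp only [h, not_true_eq_false, iff_false]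
    exact (Fin.castSucc_lt_last _).ne
  · rw [dif_neg h]
    simp [h]

lemma measurable_cond (n : ℕ) (τ : ℝ) (k : Fin n) :
    MeasurableSet {u : Fin n → ℝ | (∀ i, u i ≤ u k) ∧ τ < u k} := by
  have : {u : Fin n → ℝ | (∀ i, u i ≤ u k) ∧ τ < u k}
      = (⋂ i, {u : Fin n → ℝ | u i ≤ u k}) ∩ {u : Fin n → ℝ | τ < u k} := by
    ext u; simp [Set.mem_iInter]
  rw [this]
  exact (MeasurableSet.iInter fun i =>
      measurableSet_le (measurable_pi_apply i) (measurable_pi_apply k)).inter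
    (measurableSet_lt measurable_const (measurable_pi_apply k))

lemma measurable_predOVA (n : ℕ) (τ : ℝ) : Measurable (predOVA n τ) := by
  apply measurable_to_countable'
  intro t
  rcases Fin.eq_castSucc_or_eq_last t with ⟨j, rfl⟩ | rfl
  · have : predOVA n τ ⁻¹' {Fin.castSucc j} =
        {u : Fin n → ℝ | (∀ i, u i ≤ u j) ∧ τ < u j} ∩
          ⋂ k, ({u : Fin n → ℝ | (∀ i, u i ≤ u k) ∧ τ < u k} ∩ {u | ¬ j ≤ k})ᶜ := by
      ext u
      simp only [Set.mem_preimage, Set.mem_singleton_iff, predOVA_eq_castSucc_iff,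
        Set.mem_inter_iff, Set.mem_iInter, Set.mem_compl_iff, Set.mem_setOf_eq, not_and, not_not]
    rw [this]
    exact (measurable_cond n τ j).inter (MeasurableSet.iInter fun k =>
      ((measurable_cond n τ k).inter (MeasurableSet.const _)).compl)
  · have : predOVA n τ ⁻¹' {Fin.last n} =
        (⋃ k, {u : Fin n → ℝ | (∀ i, u i ≤ u k) ∧ τ < u k})ᶜ := by
      ext u
      simp only [Set.mem_preimage, Set.mem_singleton_iff, predOVA_eq_last_iff,
        Set.mem_compl_iff, Set.mem_iUnion, Set.mem_setOf_eq]
    rw [this]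
    exact (MeasurableSet.iUnion fun k => measurable_cond n τ k).compl

lemma continuous_psiOVA (n : ℕ) (y : Fin n) :
    Continuous (fun u : Fin n → ℝ => psiOVA n y u) := by
  unfold psiOVA
  exact ((continuous_const.sub (continuous_apply y)).max continuous_const).add
    (continuous_finset_sum _ fun i _ =>
      (continuous_const.add (continuous_apply i)).max continuous_const)

lemma abstainLoss_nonneg (n : ℕ) (y : Fin n) (t : Fin (n + 1)) :
    0 ≤ abstainLoss n (1/2) y t := by
  unfold abstainLoss; split_ifs <;> norm_num

lemma psiOVA_nonneg (n : ℕ) (y : Fin n) (u : Fin n → ℝ) : 0 ≤ psiOVA n y u :=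
  add_nonneg (le_max_right _ _) (Finset.sum_nonneg fun i _ => le_max_right _ _)

lemma psiOVA_le (n : ℕ) (y : Fin n) (v : Fin n → ℝ)
    (hv : ∀ k, -1 ≤ v k ∧ v k ≤ 1) : psiOVA n y v ≤ 2 + 2 * n := by
  unfold psiOVA
  have h1 : max (1 - v y) 0 ≤ 2 := max_le (by linarith [(hv y).1]) (by norm_num)
  have h2 : ∑ i ∈ Finset.univ.erase y, max (1 + v i) 0 ≤ 2 * n := by
    calc ∑ i ∈ Finset.univ.erase y, max (1 + v i) 0
        ≤ ∑ _i ∈ Finset.univ.erase y, (2:ℝ) :=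
          Finset.sum_le_sum fun i _ => max_le (by linarith [(hv i).2]) (by norm_num)
      _ = ((Finset.univ.erase y).card : ℝ) * 2 := by rw [Finset.sum_const, nsmul_eq_mul]
      _ ≤ (n : ℝ) * 2 := by
          have : (Finset.univ.erase y).card ≤ n := by
            calc (Finset.univ.erase y).card ≤ (Finset.univ : Finset (Fin n)).card :=
              Finset.card_le_card (Finset.erase_subset _ _)
            _ = n := by simp
          have := (Nat.cast_le (α := ℝ)).mpr this
          nlinarith
      _ = 2 * n := by ring
  linarith

/-! ### The pointwise calibration inequality -/

set_option maxHeartbeats 1000000 in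
lemma core_calib (n : ℕ) [NeZero n] (τ : ℝ) (hτ0 : -1 < τ) (hτ1 : τ < 1)
    (q : Fin n → ℝ) (hq0 : ∀ i, 0 ≤ q i) (hqs : ∑ i, q i = 1)
    (u : Fin n → ℝ) (t' : Fin (n + 1)) :
    (∑ i, q i * psiOVA n i (fun k => if 1/2 < q k then (1:ℝ) else -1))
      + (2 * (1 - |τ|)) * (∑ i, q i * abstainLoss n (1/2) i (predOVA n τ u))
    ≤ (∑ i, q i * psiOVA n i u)
      + (2 * (1 - |τ|)) * (∑ i, q i * abstainLoss n (1/2) i t') := by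
  have hτa : |τ| < 1 := abs_lt.mpr ⟨hτ0, hτ1⟩
  have hτle : τ ≤ |τ| := le_abs_self τ
  have hτle' : -τ ≤ |τ| := neg_le_abs τ
  have hq1 : ∀ i, q i ≤ 1 := by
    intro i
    calc q i ≤ ∑ k, q k := Finset.single_le_sum (fun k _ => hq0 k) (Finset.mem_univ i)
    _ = 1 := hqs
  rw [psi_sum_star n q hqs, psi_sum_eq n q u hqs]
  set D := fun i => |2 * q i - 1| - clampR (u i) * (2 * q i - 1) with hD
  have hD0 : ∀ i, 0 ≤ D i := by
    intro i
    simp only [hD]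
    have h1 : clampR (u i) * (2 * q i - 1) ≤ |clampR (u i) * (2 * q i - 1)| :=
      le_abs_self _
    have h2 : |clampR (u i) * (2 * q i - 1)| = |clampR (u i)| * |2 * q i - 1| := abs_mul _ _
    have h3 : |clampR (u i)| ≤ 1 := abs_le.mpr ⟨neg_one_le_clampR _, clampR_le_one _⟩
    have h4 : (0:ℝ) ≤ |2 * q i - 1| := abs_nonneg _
    nlinarith
  have hphi : ∑ i, (1 - |2 * q i - 1|) + ∑ i, D i ≤ ∑ i, phiR (q i) (u i) := by
    have : ∀ i ∈ Finset.univ, (1 - |2 * q i - 1|) + D i ≤ phiR (q i) (u i) := by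
      intro i _
      have := phiR_ge_lin (q i) (u i) (hq0 i) (hq1 i)
      simp only [hD]
      linarith
    calc ∑ i, (1 - |2 * q i - 1|) + ∑ i, D i
        = ∑ i, ((1 - |2 * q i - 1|) + D i) := (Finset.sum_add_distrib).symm
      _ ≤ ∑ i, phiR (q i) (u i) := Finset.sum_le_sum this
  suffices h : (2 * (1 - |τ|)) * (∑ i, q i * abstainLoss n (1/2) i (predOVA n τ u))
      ≤ (2 * (1 - |τ|)) * (∑ i, q i * abstainLoss n (1/2) i t') + ∑ i, D i by
    linarith
  have hb : ∑ i, q i * abstainLoss n (1/2) i t' = 1/2 ∨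
      ∃ M : Fin n, t' = Fin.castSucc M ∧
        ∑ i, q i * abstainLoss n (1/2) i t' = 1 - q M := by
    rcases Fin.eq_castSucc_or_eq_last t' with ⟨M, rfl⟩ | rfl
    · exact Or.inr ⟨M, rfl, lrisk_cast n q hqs M⟩
    · exact Or.inl (lrisk_last n q hqs)
  rcases predOVA_spec n τ u with ⟨hpred, hall⟩ | ⟨j, hpred, hmax, hgt⟩
  · rw [hpred, lrisk_last n q hqs]
    rcases hb with hb | ⟨M, rfl, hb⟩
    · rw [hb]
      have : (0:ℝ) ≤ ∑ i, D i := Finset.sum_nonneg (fun i _ => hD0 i)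
      linarith
    · rw [hb]
      have hDM : D M ≤ ∑ i, D i := Finset.single_le_sum (fun i _ => hD0 i) (Finset.mem_univ M)
      have hcM : clampR (u M) ≤ τ := clampR_le hτ0.le (hall M)
      rcases le_or_gt (2 * q M - 1) 0 with hs | hs
      · have : 0 ≤ D M := hD0 M
        nlinarith
      · have habs : |2 * q M - 1| = 2 * q M - 1 := abs_of_pos hs
        have h1 : 0 ≤ (2 * q M - 1) * (τ - clampR (u M)) :=
          mul_nonneg hs.le (by linarith)
        have h2 : 0 ≤ (2 * q M - 1) * (|τ| - τ) := mul_nonneg hs.le (by linarith)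
        simp only [hD] at hDM ⊢
        nlinarith
  · rw [hpred, lrisk_cast n q hqs j]
    have hcj : τ ≤ clampR (u j) := le_clampR hτ1.le hgt.le
    rcases hb with hb | ⟨M, rfl, hb⟩
    · rw [hb]
      have hDj : D j ≤ ∑ i, D i := Finset.single_le_sum (fun i _ => hD0 i) (Finset.mem_univ j)
      rcases le_or_gt 0 (2 * q j - 1) with hs | hs
      · have : 0 ≤ D j := hD0 j
        nlinarith
      · have habs : |2 * q j - 1| = -(2 * q j - 1) := abs_of_neg hs
        have h1 : 0 ≤ (-(2 * q j - 1)) * (clampR (u j) - τ) :=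
          mul_nonneg (by linarith) (by linarith)
        have h2 : 0 ≤ (-(2 * q j - 1)) * (τ + |τ|) := mul_nonneg (by linarith) (by linarith)
        simp only [hD] at hDj ⊢
        nlinarith
    · rw [hb]
      by_cases hjM : j = M
      · subst hjM
        have : (0:ℝ) ≤ ∑ i, D i := Finset.sum_nonneg (fun i _ => hD0 i)
        nlinarith
      · have hpair : D j + D M ≤ ∑ i, D i := by
          have hsub : ({j, M} : Finset (Fin n)) ⊆ Finset.univ := Finset.subset_univ _
          have := Finset.sum_le_sum_of_subset_of_nonneg hsub (fun i _ _ => hD0 i)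
          rwa [Finset.sum_pair hjM] at this
        have hqsum : q j + q M ≤ 1 := by
          have hsub : ({j, M} : Finset (Fin n)) ⊆ Finset.univ := Finset.subset_univ _
          have := Finset.sum_le_sum_of_subset_of_nonneg hsub (fun i _ _ => hq0 i)
          rw [Finset.sum_pair hjM, hqs] at this
          exact this
        set sj := 2 * q j - 1 with hsj
        set sM := 2 * q M - 1 with hsM
        set cj := clampR (u j) with hcjd
        set cM := clampR (u M) with hcMd
        have hcMj : cM ≤ cj := clampR_mono (hmax M)
        have hcj1 : cj ≤ 1 := clampR_le_one _
        have hcM1 : -1 ≤ cM := neg_one_le_clampR _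
        have hssum : sM + sj ≤ 0 := by simp only [hsj, hsM]; linarith
        have hgoal : (1 - |τ|) * (sM - sj) ≤ (|sj| - cj * sj) + (|sM| - cM * sM) := by
          rcases le_or_gt sM 0 with hsM0 | hsM0
          · rcases le_or_gt sj 0 with hsj0 | hsj0
            · rw [abs_of_nonpos hsj0]
              have h1 : 0 ≤ (-sj) * (cj - τ) := mul_nonneg (by linarith) (by linarith)
              have h2 : 0 ≤ (-sj) * (τ + |τ|) := mul_nonneg (by linarith) (by linarith)
              have h3 : 0 ≤ (-sM) * (1 - |τ|) := mul_nonneg (by linarith) (by linarith)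
              have h4 : 0 ≤ |sM| - cM * sM := by
                have := hD0 M; simp only [hD, ← hsM, ← hcMd] at this; linarith
              nlinarith
            · have h1 : 0 ≤ (1 - |τ|) * (sj - sM) := mul_nonneg (by linarith) (by linarith)
              have h4 : 0 ≤ |sM| - cM * sM := by
                have := hD0 M; simp only [hD, ← hsM, ← hcMd] at this; linarith
              have h5 : 0 ≤ |sj| - cj * sj := by
                have := hD0 j; simp only [hD, ← hsj, ← hcjd] at this; linarith
              nlinarith
          · have hsj0 : sj < 0 := by linarith
            rw [abs_of_pos hsM0, abs_of_neg hsj0]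
            have h1 : 0 ≤ sM * (cj - cM) := mul_nonneg hsM0.le (by linarith)
            rcases le_or_gt 0 cj with hcj0 | hcj0
            · have h2 : 0 ≤ cj * (-(sM + sj)) := mul_nonneg hcj0 (by linarith)
              have h3 : 0 ≤ |τ| * (sM - sj) := mul_nonneg (abs_nonneg τ) (by linarith)
              nlinarith
            · have h2 : 0 ≤ (cj + |τ|) * (-(sM + sj)) :=
                mul_nonneg (by linarith) (by linarith)
              have h3 : 0 ≤ |τ| * sM := mul_nonneg (abs_nonneg τ) hsM0.le
              nlinarith
        simp only [hD] at hpair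
        simp only [← hsj, ← hsM, ← hcjd, ← hcMd] at hpair
        nlinarith

/-! ### Disintegration lemmas -/

lemma lint_eq (n : ℕ) [NeZero n] {X : Type*} [MeasurableSpace X]
    (D : Measure (X × Fin n)) [IsProbabilityMeasure D]
    (c : X → Fin n → ℝ) (hc : Measurable fun z : X × Fin n => c z.1 z.2)
    (hc0 : ∀ x i, 0 ≤ c x i) :
    ∫⁻ z, ENNReal.ofReal (c z.1 z.2) ∂D
      = ∫⁻ x, ENNReal.ofReal (∑ i, (D.condKernel x {i}).toReal * c x i) ∂D.fst := by
  conv_lhs => rw [← D.disintegrate D.condKernel]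
  rw [Measure.lintegral_compProd hc.ennreal_ofReal]
  refine lintegral_congr fun x => ?_
  rw [lintegral_fintype (μ := D.condKernel x) (fun b => ENNReal.ofReal (c (x, b).1 (x, b).2))]
  rw [ENNReal.ofReal_sum_of_nonneg (fun i _ => mul_nonneg ENNReal.toReal_nonneg (hc0 x i))]
  refine Finset.sum_congr rfl fun i _ => ?_
  rw [ENNReal.ofReal_mul ENNReal.toReal_nonneg, ENNReal.ofReal_toReal (measure_ne_top _ _),
    mul_comm]

lemma sum_q_one (n : ℕ) [NeZero n] {X : Type*} [MeasurableSpace X]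
    (D : Measure (X × Fin n)) [IsProbabilityMeasure D] (x : X) :
    ∑ i, (D.condKernel x {i}).toReal = 1 := by
  have h1 : ∑ i : Fin n, D.condKernel x {i} = 1 := by
    have h := lintegral_fintype (μ := D.condKernel x) (fun _ => (1:ℝ≥0∞))
    simp only [lintegral_one, one_mul] at h
    rw [← h, measure_univ]
  rw [← ENNReal.toReal_sum (fun i _ => measure_ne_top _ _), h1, ENNReal.toReal_one]

/-! ### Main theorem -/

set_option maxHeartbeats 1000000 in
theorem psiOVA_excess_risk_bound (n : ℕ) (hn : 2 ≤ n) (τ : ℝ) (hτ0 : -1 < τ) (hτ1 : τ < 1)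
    {X : Type*} [MeasurableSpace X] (D : Measure (X × Fin n)) [IsProbabilityMeasure D]
    (f : X → Fin n → ℝ) (hf : Measurable f) :
    (∫⁻ z, ENNReal.ofReal (abstainLoss n (1/2) z.2 (predOVA n τ (f z.1))) ∂D) -
      (⨅ h : {h : X → Fin (n + 1) // Measurable h},
        ∫⁻ z, ENNReal.ofReal (abstainLoss n (1/2) z.2 (h.1 z.1)) ∂D) ≤
    ((∫⁻ z, ENNReal.ofReal (psiOVA n z.2 (f z.1)) ∂D) -
      (⨅ g : {g : X → Fin n → ℝ // Measurable g},
        ∫⁻ z, ENNReal.ofReal (psiOVA n z.2 (g.1 z.1)) ∂D)) /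
      ENNReal.ofReal (2 * (1 - |τ|)) := by
  haveI : NeZero n := ⟨by omega⟩
  have hτa : |τ| < 1 := abs_lt.mpr ⟨hτ0, hτ1⟩
  have hKpos : (0:ℝ) < 2 * (1 - |τ|) := by linarith
  set K : ℝ≥0∞ := ENNReal.ofReal (2 * (1 - |τ|)) with hKdef
  have hK0 : K ≠ 0 := (ENNReal.ofReal_pos.mpr hKpos).ne'
  have hKtop : K ≠ ∞ := ENNReal.ofReal_ne_top
  -- conditional probabilities
  have mq : ∀ i : Fin n, Measurable fun x => (D.condKernel x {i}).toReal := fun i =>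
    (ProbabilityTheory.Kernel.measurable_coe _ (measurableSet_singleton i)).ennreal_toReal
  have hq0 : ∀ (x : X) (i : Fin n), 0 ≤ (D.condKernel x {i}).toReal := fun _ _ =>
    ENNReal.toReal_nonneg
  -- the pointwise optimal surrogate predictor
  set g₀ : X → Fin n → ℝ :=
    fun x i => if 1/2 < (D.condKernel x {i}).toReal then 1 else -1 with hg₀
  have mg₀ : Measurable g₀ := measurable_pi_lambda _ fun i =>
    Measurable.ite (measurableSet_lt measurable_const (mq i)) measurable_const measurable_const
  -- pointwise risks
  set A : X → ℝ≥0∞ := fun x => ENNReal.ofReal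
    (∑ i, (D.condKernel x {i}).toReal * abstainLoss n (1/2) i (predOVA n τ (f x))) with hA
  set Pf : X → ℝ≥0∞ := fun x => ENNReal.ofReal
    (∑ i, (D.condKernel x {i}).toReal * psiOVA n i (f x)) with hPf
  set Pg : X → ℝ≥0∞ := fun x => ENNReal.ofReal
    (∑ i, (D.condKernel x {i}).toReal * psiOVA n i (g₀ x)) with hPg
  set Bt : X → Fin (n + 1) → ℝ≥0∞ := fun x t => ENNReal.ofReal
    (∑ i, (D.condKernel x {i}).toReal * abstainLoss n (1/2) i t) with hBt
  set Bf : X → ℝ≥0∞ := fun x => ⨅ t : Fin (n + 1), Bt x t with hBf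
  -- measurability of the pointwise risks
  have mpred : Measurable fun x => predOVA n τ (f x) := (measurable_predOVA n τ).comp hf
  have mA : Measurable A :=
    (Finset.measurable_sum _ fun i _ => (mq i).mul
      ((measurable_of_countable fun t => abstainLoss n (1/2) i t).comp mpred)).ennreal_ofReal
  have mPf : Measurable Pf :=
    (Finset.measurable_sum _ fun i _ => (mq i).mul
      ((continuous_psiOVA n i).measurable.comp hf)).ennreal_ofReal
  have mPg : Measurable Pg :=
    (Finset.measurable_sum _ fun i _ => (mq i).mul
      ((continuous_psiOVA n i).measurable.comp mg₀)).ennreal_ofReal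
  have mBt : ∀ t : Fin (n + 1), Measurable fun x => Bt x t := fun t =>
    (Finset.measurable_sum _ fun i _ => (mq i).mul measurable_const).ennreal_ofReal
  have mBf : Measurable Bf := Measurable.iInf mBt
  -- rewriting of the four risks
  have e1 : (∫⁻ z, ENNReal.ofReal (abstainLoss n (1/2) z.2 (predOVA n τ (f z.1))) ∂D)
      = ∫⁻ x, A x ∂D.fst :=
    lint_eq n D (fun x i => abstainLoss n (1/2) i (predOVA n τ (f x)))
      (measurable_from_prod_countable_left fun i =>
        (measurable_of_countable fun t => abstainLoss n (1/2) i t).comp mpred)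
      (fun x i => abstainLoss_nonneg n i _)
  have e3 : (∫⁻ z, ENNReal.ofReal (psiOVA n z.2 (f z.1)) ∂D) = ∫⁻ x, Pf x ∂D.fst :=
    lint_eq n D (fun x i => psiOVA n i (f x))
      (measurable_from_prod_countable_left fun i => (continuous_psiOVA n i).measurable.comp hf)
      (fun x i => psiOVA_nonneg n i _)
  have e2 : ∫⁻ x, Bf x ∂D.fst ≤
      ⨅ h : {h : X → Fin (n + 1) // Measurable h},
        ∫⁻ z, ENNReal.ofReal (abstainLoss n (1/2) z.2 (h.1 z.1)) ∂D := by
    refine le_iInf fun h => ?_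
    have eh : (∫⁻ z, ENNReal.ofReal (abstainLoss n (1/2) z.2 (h.1 z.1)) ∂D)
        = ∫⁻ x, ENNReal.ofReal
            (∑ i, (D.condKernel x {i}).toReal * abstainLoss n (1/2) i (h.1 x)) ∂D.fst :=
      lint_eq n D (fun x i => abstainLoss n (1/2) i (h.1 x))
        (measurable_from_prod_countable_left fun i =>
          (measurable_of_countable fun t => abstainLoss n (1/2) i t).comp h.2)
        (fun x i => abstainLoss_nonneg n i _)
    rw [eh]
    exact lintegral_mono fun x => iInf_le (fun t => Bt x t) (h.1 x)
  have e4 : (⨅ g : {g : X → Fin n → ℝ // Measurable g},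
        ∫⁻ z, ENNReal.ofReal (psiOVA n z.2 (g.1 z.1)) ∂D) ≤ ∫⁻ x, Pg x ∂D.fst := by
    have eg : (∫⁻ z, ENNReal.ofReal (psiOVA n z.2 (g₀ z.1)) ∂D) = ∫⁻ x, Pg x ∂D.fst :=
      lint_eq n D (fun x i => psiOVA n i (g₀ x))
        (measurable_from_prod_countable_left fun i => (continuous_psiOVA n i).measurable.comp mg₀)
        (fun x i => psiOVA_nonneg n i _)
    calc (⨅ g : {g : X → Fin n → ℝ // Measurable g},
          ∫⁻ z, ENNReal.ofReal (psiOVA n z.2 (g.1 z.1)) ∂D)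
        ≤ ∫⁻ z, ENNReal.ofReal (psiOVA n z.2 (g₀ z.1)) ∂D := iInf_le _ (⟨g₀, mg₀⟩ : {g : X → Fin n → ℝ // Measurable g})
      _ = ∫⁻ x, Pg x ∂D.fst := eg
  -- the pointwise inequality
  have key : ∀ x, Pg x + K * A x ≤ Pf x + K * Bf x := by
    intro x
    obtain ⟨t0, ht0⟩ := Finite.exists_min fun t : Fin (n + 1) => Bt x t
    have hBfx : Bf x = Bt x t0 := le_antisymm (iInf_le _ t0) (le_iInf ht0)
    have hcore := core_calib n τ hτ0 hτ1 (fun i => (D.condKernel x {i}).toReal)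
      (fun i => hq0 x i) (sum_q_one n D x) (f x) t0
    have h0g : 0 ≤ ∑ i, (D.condKernel x {i}).toReal *
        psiOVA n i (fun k => if 1/2 < (D.condKernel x {k}).toReal then (1:ℝ) else -1) :=
      Finset.sum_nonneg fun i _ => mul_nonneg (hq0 x i) (psiOVA_nonneg n i _)
    have h0a : 0 ≤ ∑ i, (D.condKernel x {i}).toReal *
        abstainLoss n (1/2) i (predOVA n τ (f x)) :=
      Finset.sum_nonneg fun i _ => mul_nonneg (hq0 x i) (abstainLoss_nonneg n i _)
    have h0f : 0 ≤ ∑ i, (D.condKernel x {i}).toReal * psiOVA n i (f x) :=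
      Finset.sum_nonneg fun i _ => mul_nonneg (hq0 x i) (psiOVA_nonneg n i _)
    have h0b : 0 ≤ ∑ i, (D.condKernel x {i}).toReal * abstainLoss n (1/2) i t0 :=
      Finset.sum_nonneg fun i _ => mul_nonneg (hq0 x i) (abstainLoss_nonneg n i _)
    have hmono := ENNReal.ofReal_le_ofReal hcore
    rw [ENNReal.ofReal_add h0g (mul_nonneg hKpos.le h0a),
      ENNReal.ofReal_add h0f (mul_nonneg hKpos.le h0b),
      ENNReal.ofReal_mul hKpos.le, ENNReal.ofReal_mul hKpos.le] at hmono
    rw [hBfx]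
    exact hmono
  -- integrate the pointwise inequality
  have h6 : (∫⁻ x, Pg x ∂D.fst) + K * ∫⁻ x, A x ∂D.fst
      ≤ (∫⁻ x, Pf x ∂D.fst) + K * ∫⁻ x, Bf x ∂D.fst := by
    have h5 : ∫⁻ x, (Pg x + K * A x) ∂D.fst ≤ ∫⁻ x, (Pf x + K * Bf x) ∂D.fst :=
      lintegral_mono key
    rwa [lintegral_add_left mPg, lintegral_const_mul K mA,
      lintegral_add_left mPf, lintegral_const_mul K mBf] at h5
  -- finiteness of ∫ Pg
  have hIG : (∫⁻ x, Pg x ∂D.fst) ≠ ∞ := by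
    have hb : ∀ x, Pg x ≤ ENNReal.ofReal (2 + 2 * n) := by
      intro x
      refine ENNReal.ofReal_le_ofReal ?_
      have hpsi : ∀ i : Fin n, psiOVA n i (g₀ x) ≤ 2 + 2 * n := by
        intro i
        refine psiOVA_le n i (g₀ x) fun k => ?_
        simp only [hg₀]
        split_ifs <;> norm_num
      calc ∑ i, (D.condKernel x {i}).toReal * psiOVA n i (g₀ x)
          ≤ ∑ i, (D.condKernel x {i}).toReal * (2 + 2 * n) :=
            Finset.sum_le_sum fun i _ =>
              mul_le_mul_of_nonneg_left (hpsi i) (hq0 x i)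
        _ = (∑ i, (D.condKernel x {i}).toReal) * (2 + 2 * n) := by
            rw [Finset.sum_mul]
        _ = 2 + 2 * n := by rw [sum_q_one n D x, one_mul]
    exact ((lintegral_mono hb).trans_lt (by
      rw [lintegral_const, measure_univ, mul_one]
      exact ENNReal.ofReal_lt_top)).ne
  -- final arithmetic
  rw [e1, e3]
  calc (∫⁻ x, A x ∂D.fst) -
        (⨅ h : {h : X → Fin (n + 1) // Measurable h},
          ∫⁻ z, ENNReal.ofReal (abstainLoss n (1/2) z.2 (h.1 z.1)) ∂D)
      ≤ (∫⁻ x, A x ∂D.fst) - ∫⁻ x, Bf x ∂D.fst := tsub_le_tsub_left e2 _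
    _ ≤ ((∫⁻ x, Pf x ∂D.fst) - ∫⁻ x, Pg x ∂D.fst) / K := by
        rw [ENNReal.le_div_iff_mul_le (Or.inl hK0) (Or.inl hKtop)]
        rw [ENNReal.sub_mul (fun _ _ => hKtop), tsub_le_iff_right]
        have h7 : K * (∫⁻ x, A x ∂D.fst)
            ≤ ((∫⁻ x, Pf x ∂D.fst) + K * ∫⁻ x, Bf x ∂D.fst) - ∫⁻ x, Pg x ∂D.fst :=
          ENNReal.le_sub_of_add_le_left hIG h6
        have h8 : ((∫⁻ x, Pf x ∂D.fst) + K * ∫⁻ x, Bf x ∂D.fst) - ∫⁻ x, Pg x ∂D.fst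
            ≤ ((∫⁻ x, Pf x ∂D.fst) - ∫⁻ x, Pg x ∂D.fst) + K * ∫⁻ x, Bf x ∂D.fst := by
          rw [tsub_le_iff_right]
          calc (∫⁻ x, Pf x ∂D.fst) + K * ∫⁻ x, Bf x ∂D.fst
              ≤ (((∫⁻ x, Pf x ∂D.fst) - ∫⁻ x, Pg x ∂D.fst) + ∫⁻ x, Pg x ∂D.fst)
                  + K * ∫⁻ x, Bf x ∂D.fst := add_le_add le_tsub_add le_rfl
            _ = ((∫⁻ x, Pf x ∂D.fst) - ∫⁻ x, Pg x ∂D.fst) + K * (∫⁻ x, Bf x ∂D.fst)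
                  + ∫⁻ x, Pg x ∂D.fst := by ring
        calc (∫⁻ x, A x ∂D.fst) * K = K * ∫⁻ x, A x ∂D.fst := mul_comm _ _
          _ ≤ ((∫⁻ x, Pf x ∂D.fst) - ∫⁻ x, Pg x ∂D.fst) + K * ∫⁻ x, Bf x ∂D.fst :=
              h7.trans h8
          _ = ((∫⁻ x, Pf x ∂D.fst) - ∫⁻ x, Pg x ∂D.fst) + (∫⁻ x, Bf x ∂D.fst) * K := by
              rw [mul_comm K]
    _ ≤ ((∫⁻ x, Pf x ∂D.fst) -
          (⨅ g : {g : X → Fin n → ℝ // Measurable g},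
            ∫⁻ z, ENNReal.ofReal (psiOVA n z.2 (g.1 z.1)) ∂D)) / K :=
        ENNReal.div_le_div_right (tsub_le_tsub_left e4 _) K
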